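/- In the linear-orthogonal setting, for every α ∈ [0,1] and every μ ∈ ℝ, the fixed-focus hard-attention population loss along the ansatz direction satisfies L^{FF,HA}_α( μ D ) = α log( 1 + (C−1) exp(−μ) ) + (1−α) log C. Consequently, lim_{μ→∞} L^{FF,HA}_α( μ D ) = (1−α) log C, which is strictly positive whenever α < 1; the hard-attention fixed-focus loss flattens at a value bounded away from 0 for any α < 1. -/

import Mathlib

open scoped RealInnerProductSpace BigOperators
open MeasureTheory Filter

/-- Softmax of a finite family of reals. -/
noncomputable def softmax {ι : Type*} [Fintype ι] (z : ι → ℝ) (k : ι) : ℝ :=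
  Real.exp (z k) / ∑ l, Real.exp (z l)

/-- in the linear-orthogonal setting, along the ansatz direction `D` the
fixed-focus hard-attention population loss equals `α log(1+(C−1)exp(−μ)) + (1−α) log C`;
as `μ → ∞` it tends to `(1−α) log C`, which is strictly positive whenever `α < 1`. -/
theorem fixed_focus_hard_attention_loss_along_ansatz
    (d C m : ℕ) (hd : 1 ≤ d) (hC : 2 ≤ C) (hm : 2 ≤ m)
    (s : Fin C → EuclideanSpace ℝ (Fin d)) (hs : Orthonormal ℝ s)
    (ρ : Measure (EuclideanSpace ℝ (Fin d))) [IsProbabilityMeasure ρ]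
    (hρ_int : Integrable (fun x => x) ρ)
    (hρ_mean : ∫ x, x ∂ρ = 0)
    (hρ_orth : ∀ᵐ x ∂ρ, ∀ k, ⟪x, s k⟫ = 0)
    (α : ℝ) (hα : α ∈ Set.Icc (0 : ℝ) 1)
    (D : Fin C → EuclideanSpace ℝ (Fin d))
    (hD : ∀ k, D k = s k - (C : ℝ)⁻¹ • ∑ k', s k')
    (L : (Fin C → EuclideanSpace ℝ (Fin d)) → ℝ)
    (hL : ∀ W, L W = (C : ℝ)⁻¹ * ∑ y : Fin C,
      (-(α * Real.log (softmax (fun i => ⟪W i, s y⟫) y))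
        - ((1 - α) / ((m : ℝ) - 1)) * ∑ _j : Fin (m - 1),
            ∫ b, Real.log (softmax (fun i => ⟪W i, b⟫) y) ∂ρ)) :
    (∀ μ : ℝ, L (μ • D)
        = α * Real.log (1 + (C - 1) * Real.exp (-μ)) + (1 - α) * Real.log C) ∧
    Tendsto (fun μ : ℝ => L (μ • D)) atTop (nhds ((1 - α) * Real.log C)) ∧
    (α < 1 → 0 < (1 - α) * Real.log C) := by
  
  have hC0 : (0:ℝ) < C := by
    have : (0:ℕ) < C := by omega
    exact_mod_cast this
  have hC1 : (1:ℝ) < C := by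
    have : (1:ℕ) < C := by omega
    exact_mod_cast this
  have hinner : ∀ i j, ⟪s i, s j⟫ = if i = j then (1:ℝ) else 0 :=
    orthonormal_iff_ite.mp hs
  have hsumite : ∀ (y : Fin C) (a b : ℝ),
      ∑ l : Fin C, (if l = y then a else b) = a + ((C:ℝ)-1) * b := by
    intro y a b
    have h1 : ∑ l : Fin C, (if l = y then a else b)
        = ∑ l : Fin C, ((if l = y then a - b else 0) + b) := by
      apply Finset.sum_congr rfl; intro l _; split <;> ring
    rw [h1, Finset.sum_add_distrib, Finset.sum_ite_eq']
    simp [Finset.card_univ]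
    ring
  have key : ∀ μ : ℝ, L (μ • D)
      = α * Real.log (1 + ((C:ℝ) - 1) * Real.exp (-μ)) + (1 - α) * Real.log C := by
    intro μ
    have hDin : ∀ (i : Fin C) (x : EuclideanSpace ℝ (Fin d)),
        ⟪(μ • D) i, x⟫ = μ * (⟪s i, x⟫ - (C:ℝ)⁻¹ * ∑ k', ⟪s k', x⟫) := by
      intro i x
      simp only [Pi.smul_apply, hD, real_inner_smul_left, inner_sub_left,
        real_inner_smul_left, sum_inner]
    -- softmax at the signal
    have hsm : ∀ y : Fin C,
        Real.log (softmax (fun i => ⟪(μ • D) i, s y⟫) y)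
          = -Real.log (1 + ((C:ℝ) - 1) * Real.exp (-μ)) := by
      intro y
      have hz : ∀ i : Fin C, ⟪(μ • D) i, s y⟫
          = (if i = y then μ - μ * (C:ℝ)⁻¹ else -(μ * (C:ℝ)⁻¹)) := by
        intro i
        rw [hDin]
        simp only [hinner]
        rw [Finset.sum_ite_eq' Finset.univ y (fun _ => (1:ℝ))]
        split <;> simp <;> ring
      have hden : ∑ l : Fin C, Real.exp ⟪(μ • D) l, s y⟫
          = Real.exp (μ - μ * (C:ℝ)⁻¹) * (1 + ((C:ℝ)-1) * Real.exp (-μ)) := by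
        have : ∑ l : Fin C, Real.exp ⟪(μ • D) l, s y⟫
            = ∑ l : Fin C, (if l = y then Real.exp (μ - μ * (C:ℝ)⁻¹)
                else Real.exp (-(μ * (C:ℝ)⁻¹))) := by
          apply Finset.sum_congr rfl; intro l _; rw [hz]; split <;> rfl
        rw [this, hsumite]
        rw [mul_add, mul_one]
        congr 1
        rw [mul_comm ((C:ℝ)-1) (Real.exp (-μ)), ← mul_assoc, ← Real.exp_add]
        ring_nf
      have hpos : (0:ℝ) < 1 + ((C:ℝ)-1) * Real.exp (-μ) := by
        have : (0:ℝ) < ((C:ℝ)-1) * Real.exp (-μ) := by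
          apply mul_pos (by linarith) (Real.exp_pos _)
        linarith
      have hsmval : softmax (fun i => ⟪(μ • D) i, s y⟫) y
          = (1 + ((C:ℝ)-1) * Real.exp (-μ))⁻¹ := by
        unfold softmax
        rw [hden]
        simp only [hz, if_pos rfl, if_true]
        rw [div_eq_iff (by positivity)]
        field_simp
      rw [hsmval, Real.log_inv]
    -- softmax at noise
    have hint : ∀ y : Fin C,
        ∫ b, Real.log (softmax (fun i => ⟪(μ • D) i, b⟫) y) ∂ρ = -Real.log C := by
      intro y
      have hae : (fun b => Real.log (softmax (fun i => ⟪(μ • D) i, b⟫) y))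
          =ᵐ[ρ] (fun _ => -Real.log C) := by
        filter_upwards [hρ_orth] with x hx
        have hz : ∀ i : Fin C, ⟪(μ • D) i, x⟫ = 0 := by
          intro i
          rw [hDin]
          have h1 : ⟪s i, x⟫ = 0 := by rw [real_inner_comm]; exact hx i
          have h2 : ∀ k', ⟪s k', x⟫ = (0:ℝ) := by
            intro k'; rw [real_inner_comm]; exact hx k'
          simp [h1, h2]
        have : softmax (fun i => ⟪(μ • D) i, x⟫) y = (C:ℝ)⁻¹ := by
          simp only [hz]
          simp [softmax, Finset.card_univ]
        rw [this, Real.log_inv]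
      rw [integral_congr_ae hae]
      simp
    rw [hL]
    have hm1 : ((m:ℝ) - 1) ≠ 0 := by
      have : (1:ℝ) < m := by exact_mod_cast (by omega : 1 < m)
      linarith
    have hcard : ((m - 1 : ℕ) : ℝ) = (m:ℝ) - 1 := by
      have : (1:ℕ) ≤ m := by omega
      push_cast [Nat.cast_sub this]
      ring
    have hterm : ∀ y : Fin C,
        (-(α * Real.log (softmax (fun i => ⟪(μ • D) i, s y⟫) y))
          - ((1 - α) / ((m : ℝ) - 1)) * ∑ _j : Fin (m - 1),
              ∫ b, Real.log (softmax (fun i => ⟪(μ • D) i, b⟫) y) ∂ρ)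
        = α * Real.log (1 + ((C:ℝ) - 1) * Real.exp (-μ)) + (1 - α) * Real.log C := by
      intro y
      rw [hsm y]
      rw [Finset.sum_const]
      rw [hint y]
      simp only [Finset.card_univ, Fintype.card_fin, nsmul_eq_mul, hcard]
      field_simp
      ring
    rw [Finset.sum_congr rfl (fun y _ => hterm y), Finset.sum_const]
    simp only [Finset.card_univ, Fintype.card_fin, nsmul_eq_mul]
    rw [← mul_assoc, inv_mul_cancel₀ (ne_of_gt hC0), one_mul]
  refine ⟨key, ?_, ?_⟩
  · have h0 : Tendsto (fun μ : ℝ => 1 + ((C:ℝ)-1) * Real.exp (-μ)) atTop (nhds 1) := by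
      have h1 : Tendsto (fun μ : ℝ => Real.exp (-μ)) atTop (nhds 0) :=
        Real.tendsto_exp_neg_atTop_nhds_zero
      have h2 : Tendsto (fun μ : ℝ => ((C:ℝ)-1) * Real.exp (-μ)) atTop (nhds 0) := by
        simpa using h1.const_mul ((C:ℝ)-1)
      simpa using (tendsto_const_nhds (x := (1:ℝ))).add h2
    have h3 : Tendsto (fun μ : ℝ => Real.log (1 + ((C:ℝ)-1) * Real.exp (-μ)))
        atTop (nhds 0) := by
      have := (Real.continuousAt_log one_ne_zero).tendsto.comp h0
      simpa [Function.comp_def] using this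
    have h4 : Tendsto (fun μ : ℝ => α * Real.log (1 + ((C:ℝ)-1) * Real.exp (-μ))
        + (1 - α) * Real.log C) atTop (nhds ((1 - α) * Real.log C)) := by
      have := (h3.const_mul α).add (tendsto_const_nhds (x := (1 - α) * Real.log C))
      simpa using this
    exact h4.congr (fun μ => (key μ).symm)
  · intro hα1
    have : (0:ℝ) < Real.log C := Real.log_pos hC1
    have : (0:ℝ) < 1 - α := by linarith
    positivity
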